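/- arXiv:0805.0006 — 2 statements merged into one kernel-verified Lean document; each statement's English description precedes it below -/
import Mathlib

section
/- Let G be a finite group whose order is a power of 2, and let ρ : G → GL(ℂ³) be a group homomorphism. Then G has a common eigenvector: there exists a nonzero vector v ∈ ℂ³ such that for every g ∈ G there is a scalar c ∈ ℂ with ρ(g)(v) = c • v. -/
open Module Submodule

/-- Auxiliary: the statement for all groups, by induction on `r`. -/
theorem common_eigenvector_aux (r : ℕ) : ∀ (G : Type) [Group G] [Fintype G],
    Fintype.card G = 2 ^ r → ∀ ρ : G →* ((Fin 3 → ℂ) ≃ₗ[ℂ] (Fin 3 → ℂ)),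
    ∃ v : Fin 3 → ℂ, v ≠ 0 ∧ ∀ g : G, ∃ c : ℂ, ρ g v = c • v := by
  induction r with
  | zero =>
    intro G _ _ hG ρ
    have hsub : Subsingleton G := Fintype.card_le_one_iff_subsingleton.mp (by omega)
    refine ⟨fun _ => 1, ?_, ?_⟩
    · intro h; simpa using congrFun h 0
    · intro g
      have hg1 : g = 1 := Subsingleton.elim g 1
      exact ⟨1, by rw [hg1, map_one, one_smul]; rfl⟩
  | succ r ih =>
    intro G _ _ hG ρ
    have : Fact (Nat.Prime 2) := ⟨Nat.prime_two⟩
    have hdvd : (2:ℕ) ^ r ∣ Nat.card G := by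
      rw [Nat.card_eq_fintype_card, hG]; exact pow_dvd_pow 2 (Nat.le_succ r)
    obtain ⟨H, hHcard⟩ := Sylow.exists_subgroup_card_pow_prime 2 hdvd
    have hHindex : H.index = 2 := by
      have hmi := H.card_mul_index
      rw [hHcard, Nat.card_eq_fintype_card, hG, pow_succ] at hmi
      have h2r : (0:ℕ) < 2 ^ r := by positivity
      exact Nat.eq_of_mul_eq_mul_left h2r hmi
    -- an element outside H
    obtain ⟨g, hg⟩ : ∃ g : G, g ∉ H := by
      by_contra h
      push_neg at h
      have : H = ⊤ := Subgroup.eq_top_iff' H |>.mpr h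
      rw [this, Subgroup.index_top] at hHindex; omega
    have hmem : ∀ a b : G, a * b ∈ H ↔ (a ∈ H ↔ b ∈ H) := fun a b =>
      Subgroup.mul_mem_iff_of_index_two hHindex
    have hginv : g⁻¹ ∉ H := fun h => hg (H.inv_mem_iff.mp h)
    -- apply the induction hypothesis to H
    have : Fintype H := Fintype.ofFinite H
    have hHcard' : Fintype.card H = 2 ^ r := by
      rw [← Nat.card_eq_fintype_card, hHcard]
    obtain ⟨v, hv0, hv⟩ := ih H hHcard' (ρ.comp H.subtype)
    have hvH : ∀ n ∈ H, ∃ c : ℂ, ρ n v = c • v := fun n hn => hv ⟨n, hn⟩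
    have hmul : ∀ (x y : G) (u : Fin 3 → ℂ), ρ (x * y) u = ρ x (ρ y u) := by
      intro x y u; rw [map_mul]; rfl
    set w : Fin 3 → ℂ := ρ g v with hw
    -- H acts by scalars on w, too
    have hwH : ∀ n ∈ H, ∃ c : ℂ, ρ n w = c • w := by
      intro n hn
      have h1 : g⁻¹ * n ∉ H := by
        intro h; rw [hmem] at h; exact hginv (h.mpr hn)
      have h2 : g⁻¹ * n * g ∈ H := by
        rw [hmem]; constructor <;> intro h <;> [exact absurd h h1; exact absurd h hg]
      obtain ⟨c, hc⟩ := hvH _ h2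
      refine ⟨c, ?_⟩
      have key : n * g = g * (g⁻¹ * n * g) := by group
      rw [hw, ← hmul, key, hmul, hc, map_smul]
    by_cases hA : w ∈ span ℂ {v}
    · -- Case A : v is a common eigenvector for all of G
      obtain ⟨a, ha⟩ := mem_span_singleton.mp hA
      refine ⟨v, hv0, fun x => ?_⟩
      by_cases hx : x ∈ H
      · exact hvH x hx
      · have hn : x * g⁻¹ ∈ H := by
          rw [hmem]; constructor <;> intro h <;> [exact absurd h hx; exact absurd h hginv]
        obtain ⟨c, hc⟩ := hvH _ hn
        refine ⟨a * c, ?_⟩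
        have key : x = (x * g⁻¹) * g := by group
        rw [key, hmul, ← hw, ← ha, map_smul, hc, smul_smul]
    · -- Case B : span {v, w} is a 2-dimensional invariant subspace
      set U : Submodule ℂ (Fin 3 → ℂ) := span ℂ {v, w} with hU
      have hvU : v ∈ U := subset_span (by simp)
      have hwU : w ∈ U := subset_span (by simp)
      -- each ρ x maps the generators into U
      have hgenv : ∀ x : G, ρ x v ∈ U := by
        intro x
        by_cases hx : x ∈ H
        · obtain ⟨c, hc⟩ := hvH x hx; rw [hc]; exact U.smul_mem c hvU
        · have hn : x * g⁻¹ ∈ H := by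
            rw [hmem]; constructor <;> intro h <;> [exact absurd h hx; exact absurd h hginv]
          obtain ⟨c, hc⟩ := hwH _ hn
          have key : x = (x * g⁻¹) * g := by group
          rw [key, hmul, ← hw, hc]
          exact U.smul_mem c hwU
      have hgenw : ∀ x : G, ρ x w ∈ U := by
        intro x
        by_cases hx : x ∈ H
        · obtain ⟨c, hc⟩ := hwH x hx; rw [hc]; exact U.smul_mem c hwU
        · have hn : x * g ∈ H := by
            rw [hmem]; constructor <;> intro h <;> [exact absurd h hx; exact absurd h hg]
          obtain ⟨c, hc⟩ := hvH _ hn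
          rw [hw, ← hmul, hc]
          exact U.smul_mem c hvU
      have hUinv : ∀ (x : G) (u : Fin 3 → ℂ), u ∈ U → ρ x u ∈ U := by
        intro x u hu
        induction hu using Submodule.span_induction with
        | mem y hy =>
          rcases hy with h | h
          · rw [h]; exact hgenv x
          · rw [Set.mem_singleton_iff] at h; rw [h]; exact hgenw x
        | zero => simpa using U.zero_mem
        | add y z _ _ hy hz => rw [map_add]; exact U.add_mem hy hz
        | smul c y _ hy => rw [map_smul]; exact U.smul_mem c hy
      -- U is 2-dimensional
      have hindep : LinearIndependent ℂ ![w, v] := by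
        rw [linearIndependent_fin2]
        refine ⟨hv0, fun a hav => hA ?_⟩
        simp only [Matrix.cons_val_one, Matrix.head_cons, Matrix.cons_val_zero] at hav
        exact mem_span_singleton.mpr ⟨a, hav⟩
      have hUrank : finrank ℂ U = 2 := by
        have hset : ({v, w} : Set (Fin 3 → ℂ)) = Set.range ![w, v] := by
          ext u; simp [Fin.exists_fin_two, or_comm, eq_comm]
        rw [hU, hset]
        exact (finrank_span_eq_card hindep).trans (by simp)
      -- an auxiliary projection onto U
      obtain ⟨U', hU'⟩ := Submodule.exists_isCompl U
      set π : (Fin 3 → ℂ) →ₗ[ℂ] (Fin 3 → ℂ) :=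
        U.subtype ∘ₗ Submodule.projectionOnto U U' hU' with hπ
      have hπ1 : ∀ u ∈ U, π u = u := by
        intro u hu
        have h1 := Submodule.linearProjOfIsCompl_apply_left hU' ⟨u, hu⟩
        simp only [hπ, LinearMap.comp_apply, Submodule.subtype_apply]
        rw [h1]
      have hπ2 : ∀ z, π z ∈ U := fun z => (Submodule.projectionOnto U U' hU' z).2
      -- the averaged (equivariant) projection onto U
      set Q : (Fin 3 → ℂ) →ₗ[ℂ] (Fin 3 → ℂ) :=
        (Fintype.card G : ℂ)⁻¹ • ∑ x : G, ((ρ x).toLinearMap ∘ₗ π ∘ₗ (ρ x⁻¹).toLinearMap)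
        with hQ
      have hQapp : ∀ z, Q z = (Fintype.card G : ℂ)⁻¹ • ∑ x : G, ρ x (π (ρ x⁻¹ z)) := by
        intro z
        simp [hQ, LinearMap.sum_apply]
      have hcard0 : (Fintype.card G : ℂ) ≠ 0 := by
        rw [hG]
        exact_mod_cast pow_ne_zero (r+1) two_ne_zero
      have hQU : ∀ u ∈ U, Q u = u := by
        intro u hu
        have hterm : ∀ x : G, ρ x (π (ρ x⁻¹ u)) = u := by
          intro x
          rw [hπ1 _ (hUinv x⁻¹ u hu), ← hmul, mul_inv_cancel, map_one]; rfl
        rw [hQapp, Finset.sum_congr rfl (fun x _ => hterm x), Finset.sum_const,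
          Finset.card_univ, ← Nat.cast_smul_eq_nsmul ℂ, smul_smul, inv_mul_cancel₀ hcard0, one_smul]
      have hQrange : ∀ z, Q z ∈ U := by
        intro z
        rw [hQapp]
        exact U.smul_mem _ (Submodule.sum_mem U (fun x _ => hUinv x _ (hπ2 _)))
      have hQcomm : ∀ (y : G) (z : Fin 3 → ℂ), Q (ρ y z) = ρ y (Q z) := by
        intro y z
        rw [hQapp, hQapp, map_smul, map_sum]
        congr 1
        refine (Fintype.sum_bijective (fun x => y * x)
          (Group.mulLeft_bijective y) _ _ (fun x => ?_)).symm
        have e1 : ρ (y * x)⁻¹ (ρ y z) = ρ x⁻¹ z := by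
          rw [← hmul, show (y * x)⁻¹ * y = x⁻¹ by group]
        rw [e1, ← hmul]
      -- the kernel of Q is a 1-dimensional invariant complement
      have hrange : LinearMap.range Q = U := by
        apply le_antisymm
        · rintro _ ⟨z, rfl⟩
          exact hQrange z
        · intro u hu
          exact ⟨u, hQU u hu⟩
      have hker : finrank ℂ (LinearMap.ker Q) = 1 := by
        have h1 := LinearMap.finrank_range_add_finrank_ker Q
        have h3 : finrank ℂ (Fin 3 → ℂ) = 3 := by simp
        rw [hrange, hUrank, h3] at h1
        omega
      obtain ⟨z, hzK, hz0⟩ := (Submodule.ne_bot_iff (LinearMap.ker Q)).mp (by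
        intro h
        rw [h] at hker
        simp at hker)
      have hspan : span ℂ {z} = LinearMap.ker Q := by
        apply Submodule.eq_of_le_of_finrank_le
        · rwa [span_singleton_le_iff_mem]
        · rw [finrank_span_singleton hz0, hker]
      refine ⟨z, hz0, fun y => ?_⟩
      have hzy : ρ y z ∈ LinearMap.ker Q := by
        rw [LinearMap.mem_ker, hQcomm, LinearMap.mem_ker.mp hzK, map_zero]
      rw [← hspan] at hzy
      obtain ⟨c, hc⟩ := mem_span_singleton.mp hzy
      exact ⟨c, hc.symm⟩

/-- A finite group of 2-power order acting linearly on `ℂ³` has a common eigenvector. -/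
theorem common_eigenvector (G : Type) [Group G] [Fintype G] (r : ℕ)
    (hG : Fintype.card G = 2 ^ r)
    (ρ : G →* ((Fin 3 → ℂ) ≃ₗ[ℂ] (Fin 3 → ℂ))) :
    ∃ v : Fin 3 → ℂ, v ≠ 0 ∧ ∀ g : G, ∃ c : ℂ, ρ g v = c • v :=
  common_eigenvector_aux r G hG ρ
end

section
/- Let G be the dihedral group of order 8, W the 7-dimensional sum-zero subrepresentation of its complex left regular representation, Sym²W its symmetric square, and χ₃ : G → ℂ the character with χ₃(r^i) = (−1)^i and χ₃(s r^i) = (−1)^{i+1}. Then the complex vector space of linear maps f : Sym²W → ℂ satisfying f(g • x) = χ₃(g) · f(x) for all g ∈ G and x ∈ Sym²W has dimension 4. -/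
open scoped TensorProduct

set_option synthInstance.maxHeartbeats 1000000
set_option maxHeartbeats 1000000

/-- The left regular action of `g` on functions `DihedralGroup 4 → ℂ`:
`(reg g f) x = f (g⁻¹ * x)`. -/
noncomputable def reg (g : DihedralGroup 4) :
    (DihedralGroup 4 → ℂ) →ₗ[ℂ] (DihedralGroup 4 → ℂ) :=
  LinearMap.funLeft ℂ ℂ (fun x => g⁻¹ * x)

/-- The subspace of sum-zero functions: the regular representation minus the
trivial representation; it is 7-dimensional. -/
noncomputable def W : Submodule ℂ (DihedralGroup 4 → ℂ) :=
  LinearMap.ker (∑ x : DihedralGroup 4, LinearMap.proj x :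
    (DihedralGroup 4 → ℂ) →ₗ[ℂ] ℂ)

lemma reg_mem_W (g : DihedralGroup 4) {f : DihedralGroup 4 → ℂ} (hf : f ∈ W) :
    reg g f ∈ W := by
  simp only [W, LinearMap.mem_ker, LinearMap.sum_apply, LinearMap.proj_apply] at hf ⊢
  calc ∑ x : DihedralGroup 4, reg g f x
      = ∑ x : DihedralGroup 4, f x :=
        Fintype.sum_equiv (Equiv.mulLeft g⁻¹) _ _ (fun x => rfl)
    _ = 0 := hf

/-- The action of `g` on `W`. -/
noncomputable def regW (g : DihedralGroup 4) : W →ₗ[ℂ] W :=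
  (reg g).restrict (fun _ hf => reg_mem_W g hf)

noncomputable instance : AddCommGroup (↥W ⊗[ℂ] ↥W) := TensorProduct.addCommGroup

/-- The diagonal action of `g` on `W ⊗ W`. -/
noncomputable def tenAct (g : DihedralGroup 4) : (↥W ⊗[ℂ] ↥W) →ₗ[ℂ] (↥W ⊗[ℂ] ↥W) :=
  TensorProduct.map (regW g) (regW g)

/-- The subspace of `W ⊗ W` spanned by the elements `x ⊗ y - y ⊗ x`. -/
noncomputable def symRel : Submodule ℂ (↥W ⊗[ℂ] ↥W) :=
  Submodule.span ℂ {z | ∃ x y : W, z = x ⊗ₜ[ℂ] y - y ⊗ₜ[ℂ] x}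

/-- The symmetric square `Sym² W`: the quotient of `W ⊗ W` by the span of the
elements `x ⊗ y - y ⊗ x`. -/
noncomputable abbrev Sym2W : Type := (↥W ⊗[ℂ] ↥W) ⧸ symRel

lemma symRel_le (g : DihedralGroup 4) : symRel ≤ symRel.comap (tenAct g) := by
  rw [symRel, Submodule.span_le]
  rintro z ⟨x, y, rfl⟩
  simp only [Submodule.mem_comap, map_sub, tenAct, TensorProduct.map_tmul]
  exact Submodule.subset_span ⟨regW g x, regW g y, rfl⟩

/-- The induced action of `g` on `Sym² W`. -/
noncomputable def symAct (g : DihedralGroup 4) : Sym2W →ₗ[ℂ] Sym2W :=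
  Submodule.mapQ symRel symRel (tenAct g) (symRel_le g)

/-- The space of `χ`-equivariant linear functionals on `Sym² W`. -/
noncomputable def eqMaps (χ : DihedralGroup 4 → ℂ) : Submodule ℂ (Sym2W →ₗ[ℂ] ℂ) where
  carrier := {f | ∀ (g : DihedralGroup 4) (x : Sym2W), f (symAct g x) = χ g * f x}
  add_mem' := by
    intro a b ha hb g x
    simp only [LinearMap.add_apply, ha g x, hb g x]
    ring
  zero_mem' := by
    intro g x
    simp
  smul_mem' := by
    intro c f hf g x
    simp only [LinearMap.smul_apply, hf g x, smul_eq_mul]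
    ring

/-- The character of `DihedralGroup 4` with `χ₃(r^i) = (-1)^i` and
`χ₃(s r^i) = (-1)^(i+1)`. -/
noncomputable def chi3 : DihedralGroup 4 → ℂ
  | .r i => (-1) ^ i.val
  | .sr i => (-1) ^ (i.val + 1)

-- new stuff

abbrev G4 := DihedralGroup 4

lemma mem_W_iff (f : G4 → ℂ) : f ∈ W ↔ ∑ x : G4, f x = 0 := by
  simp [W, LinearMap.mem_ker]

lemma card_G4 : (Finset.univ : Finset G4).card = 8 := by decide

noncomputable def ee (a : G4) : W :=
  ⟨(fun x => if x = a then 1 else 0) - (fun _ => (1/8 : ℂ)), by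
    rw [mem_W_iff]
    have h8 : (Fintype.card G4 : ℂ) = 8 := by
      rw [show Fintype.card G4 = 8 from by decide]; norm_num
    simp [Finset.sum_sub_distrib, Finset.sum_ite_eq', Finset.card_univ, h8]⟩

lemma ee_apply (a x : G4) : (ee a : G4 → ℂ) x = (if x = a then 1 else 0) - 1/8 := rfl

lemma regW_ee (g a : G4) : regW g (ee a) = ee (g * a) := by
  apply Subtype.ext
  funext x
  show (ee a : G4 → ℂ) (g⁻¹ * x) = (ee (g*a) : G4 → ℂ) x
  rw [ee_apply, ee_apply]
  congr 2
  simp [eq_comm, inv_mul_eq_iff_eq_mul]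
  constructor
  · rintro rfl; group
  · rintro rfl; group

lemma sum_ee : ∑ a : G4, ee a = 0 := by
  apply Subtype.ext
  have : ((∑ a : G4, ee a : W) : G4 → ℂ) = ∑ a : G4, (ee a : G4 → ℂ) := by
    simp
  rw [this]
  funext x
  simp only [Finset.sum_apply, ee_apply, Pi.zero_apply]
  have h8 : (Fintype.card G4 : ℂ) = 8 := by
    rw [show Fintype.card G4 = 8 from by decide]; norm_num
  simp [Finset.sum_sub_distrib, Finset.sum_ite_eq, Finset.card_univ, h8]

lemma span_ee : Submodule.span ℂ (Set.range ee) = ⊤ := by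
  rw [eq_top_iff]
  rintro w -
  have hw : w = ∑ a : G4, (w : G4 → ℂ) a • ee a := by
    apply Subtype.ext
    have : ((∑ a : G4, (w : G4 → ℂ) a • ee a : W) : G4 → ℂ)
        = ∑ a : G4, (w : G4 → ℂ) a • (ee a : G4 → ℂ) := by simp
    rw [this]
    funext x
    simp only [Finset.sum_apply, Pi.smul_apply, ee_apply, smul_eq_mul]
    have hsum : ∑ a : G4, (w : G4 → ℂ) a = 0 := (mem_W_iff _).1 w.2
    rw [Finset.sum_congr rfl (fun a _ => mul_sub ((w : G4 → ℂ) a) _ _)]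
    rw [Finset.sum_sub_distrib]
    rw [← Finset.sum_mul, hsum]
    simp [Finset.sum_ite_eq', mul_ite]
  rw [hw]
  exact Submodule.sum_mem _ (fun a _ =>
    Submodule.smul_mem _ _ (Submodule.subset_span ⟨a, rfl⟩))

-- new

noncomputable def q : (↥W ⊗[ℂ] ↥W) →ₗ[ℂ] Sym2W := symRel.mkQ

lemma symAct_mk (g : G4) (x y : W) :
    symAct g (q (x ⊗ₜ[ℂ] y)) = q ((regW g x) ⊗ₜ[ℂ] (regW g y)) := by
  show symAct g (Submodule.Quotient.mk _) = _
  rw [symAct, Submodule.mapQ_apply]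
  rfl

lemma q_symm (x y : W) : q (x ⊗ₜ[ℂ] y) = q (y ⊗ₜ[ℂ] x) := by
  rw [q, Submodule.mkQ_apply, Submodule.mkQ_apply, Submodule.Quotient.eq]
  exact Submodule.subset_span ⟨x, y, rfl⟩

lemma sym_ext {f g : Sym2W →ₗ[ℂ] ℂ}
    (h : ∀ a b : G4, f (q (ee a ⊗ₜ[ℂ] ee b)) = g (q (ee a ⊗ₜ[ℂ] ee b))) : f = g := by
  have hq : f.comp q = g.comp q := by
    apply TensorProduct.curry_injective
    apply LinearMap.ext_on span_ee
    rintro x ⟨a, rfl⟩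
    apply LinearMap.ext_on span_ee
    rintro y ⟨b, rfl⟩
    exact h a b
  exact LinearMap.ext fun z => by
    obtain ⟨y, rfl⟩ := Submodule.mkQ_surjective symRel z
    exact LinearMap.congr_fun hq y

def chiZ : DihedralGroup 4 → ℤ
  | .r i => (-1) ^ i.val
  | .sr i => (-1) ^ (i.val + 1)

lemma chi3_eq_chiZ (g : DihedralGroup 4) : chi3 g = (chiZ g : ℂ) := by
  rcases g with i | i <;> simp [chi3, chiZ]

lemma chi3_mul (g h : DihedralGroup 4) : chi3 (g * h) = chi3 g * chi3 h := by
  have : chiZ (g * h) = chiZ g * chiZ h := by revert g h; decide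
  rw [chi3_eq_chiZ, chi3_eq_chiZ, chi3_eq_chiZ, this]; push_cast; ring

lemma chi3_inv (g : DihedralGroup 4) : chi3 g⁻¹ = chi3 g := by
  have : chiZ g⁻¹ = chiZ g := by revert g; decide
  rw [chi3_eq_chiZ, chi3_eq_chiZ, this]

lemma chi3_sq (g : DihedralGroup 4) : chi3 g * chi3 g = 1 := by
  have : chiZ g * chiZ g = 1 := by revert g; decide
  rw [chi3_eq_chiZ]
  have := congrArg (fun z : ℤ => (z : ℂ)) this
  push_cast at this
  exact this

lemma chi3_one : chi3 1 = 1 := by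
  have : chiZ 1 = 1 := by decide
  rw [chi3_eq_chiZ, this]; norm_num

def myEquiv : (ZMod 4) ⊕ (ZMod 4) ≃ DihedralGroup 4 where
  toFun i := match i with | Sum.inl j => .r j | Sum.inr j => .sr j
  invFun i := match i with | .r j => Sum.inl j | .sr j => Sum.inr j
  left_inv := by rintro (x | x) <;> rfl
  right_inv := by rintro (x | x) <;> rfl

lemma sum_zmod4 (f : ZMod 4 → ℂ) : ∑ i : ZMod 4, f i = f 0 + f 1 + f 2 + f 3 :=
  Fin.sum_univ_four f

lemma sum_G (f : DihedralGroup 4 → ℂ) :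
    ∑ x : DihedralGroup 4, f x =
      f (.r 0) + f (.r 1) + f (.r 2) + f (.r 3) +
      f (.sr 0) + f (.sr 1) + f (.sr 2) + f (.sr 3) := by
  rw [← Fintype.sum_equiv myEquiv (fun x => f (myEquiv x)) f (fun x => rfl)]
  rw [Fintype.sum_sum_type, sum_zmod4, sum_zmod4]
  simp [myEquiv]
  ring

/-- The concrete model: functions `m` with `m b = χ₃ b * m b⁻¹` and `∑ χ₃ c * m c = 0`. -/

noncomputable def S : Submodule ℂ (G4 → ℂ) where
  carrier := {m | (∀ b, m b = chi3 b * m b⁻¹) ∧ ∑ c : G4, chi3 c * m c = 0}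
  add_mem' := by
    rintro a b ⟨ha1, ha2⟩ ⟨hb1, hb2⟩
    refine ⟨fun x => ?_, ?_⟩
    · simp only [Pi.add_apply, ha1 x, hb1 x]; ring
    · simp only [Pi.add_apply]
      rw [Finset.sum_congr rfl (fun c _ => mul_add (chi3 c) _ _), Finset.sum_add_distrib,
        ha2, hb2, add_zero]
  zero_mem' := by
    refine ⟨fun b => by simp, by simp⟩
  smul_mem' := by
    rintro c m ⟨h1, h2⟩
    refine ⟨fun b => ?_, ?_⟩
    · simp only [Pi.smul_apply, smul_eq_mul, h1 b]; ring
    · have : ∀ x : G4, chi3 x * (c • m) x = c * (chi3 x * m x) := by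
        intro x; simp [Pi.smul_apply]; ring
      rw [Finset.sum_congr rfl (fun x _ => this x), ← Finset.mul_sum, h2, mul_zero]

lemma sum_m_eq_zero {m : G4 → ℂ} (hm : m ∈ S) : ∑ c : G4, m c = 0 := by
  have h1 : ∀ c : G4, m c = chi3 c * m c⁻¹ := hm.1
  calc ∑ c : G4, m c = ∑ c : G4, chi3 c * m c⁻¹ := Finset.sum_congr rfl (fun c _ => h1 c)
    _ = ∑ c : G4, chi3 c⁻¹ * m c :=
        Fintype.sum_equiv (Equiv.inv G4) _ _ (fun x => by simp)
    _ = ∑ c : G4, chi3 c * m c := Finset.sum_congr rfl (fun c _ => by rw [chi3_inv])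
    _ = 0 := hm.2

noncomputable def Mm (m : G4 → ℂ) (a b : G4) : ℂ := chi3 a * m (a⁻¹ * b)

noncomputable def Bm (m : G4 → ℂ) : (G4 → ℂ) →ₗ[ℂ] (G4 → ℂ) →ₗ[ℂ] ℂ :=
  LinearMap.mk₂ ℂ (fun x y => ∑ a : G4, ∑ b : G4, Mm m a b * x a * y b)
    (fun x x' y => by
      rw [← Finset.sum_add_distrib]
      refine Finset.sum_congr rfl fun a _ => ?_
      rw [← Finset.sum_add_distrib]
      refine Finset.sum_congr rfl fun b _ => ?_
      simp only [Pi.add_apply]; ring)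
    (fun c x y => by
      rw [Finset.smul_sum]
      refine Finset.sum_congr rfl fun a _ => ?_
      rw [Finset.smul_sum]
      refine Finset.sum_congr rfl fun b _ => ?_
      simp only [Pi.smul_apply, smul_eq_mul]; ring)
    (fun y x x' => by
      rw [← Finset.sum_add_distrib]
      refine Finset.sum_congr rfl fun a _ => ?_
      rw [← Finset.sum_add_distrib]
      refine Finset.sum_congr rfl fun b _ => ?_
      simp only [Pi.add_apply]; ring)
    (fun c y x => by
      rw [Finset.smul_sum]
      refine Finset.sum_congr rfl fun a _ => ?_
      rw [Finset.smul_sum]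
      refine Finset.sum_congr rfl fun b _ => ?_
      simp only [Pi.smul_apply, smul_eq_mul]; ring)

lemma Bm_apply (m x y : G4 → ℂ) :
    Bm m x y = ∑ a : G4, ∑ b : G4, Mm m a b * x a * y b := rfl

lemma Mm_symm {m : G4 → ℂ} (hm : m ∈ S) (a b : G4) : Mm m a b = Mm m b a := by
  rw [Mm, Mm, hm.1 (a⁻¹ * b), ← mul_assoc, ← chi3_mul]
  congr 2
  · group
  · group

lemma Bm_symm {m : G4 → ℂ} (hm : m ∈ S) (x y : G4 → ℂ) : Bm m x y = Bm m y x := by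
  rw [Bm_apply, Bm_apply, Finset.sum_comm]
  refine Finset.sum_congr rfl fun b _ => Finset.sum_congr rfl fun a _ => ?_
  rw [Mm_symm hm a b]; ring

lemma Mm_g (m : G4 → ℂ) (g a b : G4) : Mm m (g*a) (g*b) = chi3 g * Mm m a b := by
  rw [Mm, Mm, chi3_mul, mul_assoc]
  congr 2
  group

lemma Bm_equiv (m : G4 → ℂ) (g : G4) (x y : G4 → ℂ) :
    Bm m (reg g x) (reg g y) = chi3 g * Bm m x y := by
  rw [Bm_apply, Bm_apply, Finset.mul_sum]
  refine Fintype.sum_equiv (Equiv.mulLeft g⁻¹) _ _ fun a => ?_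
  rw [Finset.mul_sum]
  refine Fintype.sum_equiv (Equiv.mulLeft g⁻¹) _ _ fun b => ?_
  show Mm m a b * reg g x a * reg g y b
      = chi3 g * (Mm m (g⁻¹ * a) (g⁻¹ * b) * x (g⁻¹ * a) * y (g⁻¹ * b))
  rw [Mm_g m g⁻¹ a b, chi3_inv]
  show Mm m a b * x (g⁻¹ * a) * y (g⁻¹ * b)
      = chi3 g * (chi3 g * Mm m a b * x (g⁻¹ * a) * y (g⁻¹ * b))
  linear_combination (-(Mm m a b * x (g⁻¹ * a) * y (g⁻¹ * b))) * chi3_sq g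

lemma Mm_row {m : G4 → ℂ} (hm : m ∈ S) (a : G4) : ∑ b : G4, Mm m a b = 0 := by
  have : ∑ b : G4, Mm m a b = chi3 a * ∑ b : G4, m (a⁻¹ * b) := by
    simp only [Mm]
    rw [Finset.mul_sum]
  rw [this]
  have h2 : ∑ b : G4, m (a⁻¹ * b) = ∑ b : G4, m b :=
    Fintype.sum_equiv (Equiv.mulLeft a⁻¹) _ _ (fun b => rfl)
  rw [h2, sum_m_eq_zero hm, mul_zero]

lemma Mm_col {m : G4 → ℂ} (hm : m ∈ S) (b : G4) : ∑ a : G4, Mm m a b = 0 := by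
  have : ∑ d : G4, chi3 b * (chi3 d * m d) = ∑ a : G4, Mm m a b := by
    refine Fintype.sum_equiv ((Equiv.inv G4).trans (Equiv.mulLeft b)) _ _ fun d => ?_
    show chi3 b * (chi3 d * m d) = Mm m (b * d⁻¹) b
    rw [Mm, chi3_mul, chi3_inv]
    have : (b * d⁻¹)⁻¹ * b = d := by group
    rw [this, mul_assoc]
  rw [← this, ← Finset.mul_sum, hm.2, mul_zero]

noncomputable def da (a : G4) : G4 → ℂ := fun x => if x = a then 1 else 0

noncomputable def cst : G4 → ℂ := fun _ => 1/8

lemma Bm_da (m : G4 → ℂ) (a b : G4) : Bm m (da a) (da b) = Mm m a b := by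
  rw [Bm_apply]
  simp [da, mul_ite, ite_mul, Finset.sum_ite_eq', Finset.mem_univ]

lemma Bm_cst_right {m : G4 → ℂ} (hm : m ∈ S) (x : G4 → ℂ) : Bm m x cst = 0 := by
  rw [Bm_apply]
  refine Finset.sum_eq_zero fun a _ => ?_
  have : ∑ b : G4, Mm m a b * x a * cst b = (∑ b : G4, Mm m a b) * (x a * (1/8)) := by
    rw [Finset.sum_mul]
    exact Finset.sum_congr rfl fun b _ => by rw [cst]; ring
  rw [this, Mm_row hm, zero_mul]

lemma Bm_cst_left {m : G4 → ℂ} (hm : m ∈ S) (y : G4 → ℂ) : Bm m cst y = 0 := by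
  rw [Bm_apply, Finset.sum_comm]
  refine Finset.sum_eq_zero fun b _ => ?_
  have : ∑ a : G4, Mm m a b * cst a * y b = (∑ a : G4, Mm m a b) * (1/8 * y b) := by
    rw [Finset.sum_mul]
    exact Finset.sum_congr rfl fun a _ => by rw [cst]; ring
  rw [this, Mm_col hm, zero_mul]

lemma ee_coe (a : G4) : (ee a : G4 → ℂ) = da a - cst := rfl

lemma Bm_ee {m : G4 → ℂ} (hm : m ∈ S) (a b : G4) :
    Bm m (ee a : G4 → ℂ) (ee b : G4 → ℂ) = Mm m a b := by
  simp only [ee_coe, map_sub, LinearMap.sub_apply]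
  rw [Bm_cst_right hm, Bm_cst_left hm, Bm_cst_right hm, Bm_da]
  ring

noncomputable def BW (m : G4 → ℂ) : W →ₗ[ℂ] W →ₗ[ℂ] ℂ :=
  ((Bm m).comp W.subtype).compl₂ W.subtype

lemma BW_apply (m : G4 → ℂ) (x y : W) : BW m x y = Bm m (x : G4 → ℂ) (y : G4 → ℂ) := rfl

noncomputable def Fm (m : G4 → ℂ) : (↥W ⊗[ℂ] ↥W) →ₗ[ℂ] ℂ := TensorProduct.lift (BW m)

lemma Fm_tmul (m : G4 → ℂ) (x y : W) : Fm m (x ⊗ₜ[ℂ] y) = Bm m (x : G4 → ℂ) (y : G4 → ℂ) :=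
  rfl

lemma Fm_vanish {m : G4 → ℂ} (hm : m ∈ S) : symRel ≤ LinearMap.ker (Fm m) := by
  rw [symRel, Submodule.span_le]
  rintro z ⟨x, y, rfl⟩
  simp only [SetLike.mem_coe, LinearMap.mem_ker, map_sub, Fm_tmul]
  exact sub_eq_zero.2 (Bm_symm hm _ _)

noncomputable def fm {m : G4 → ℂ} (hm : m ∈ S) : Sym2W →ₗ[ℂ] ℂ :=
  Submodule.liftQ symRel (Fm m) (Fm_vanish hm)

lemma fm_mk {m : G4 → ℂ} (hm : m ∈ S) (z : ↥W ⊗[ℂ] ↥W) : fm hm (q z) = Fm m z := rfl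

lemma fm_ee {m : G4 → ℂ} (hm : m ∈ S) (a b : G4) :
    fm hm (q (ee a ⊗ₜ[ℂ] ee b)) = Mm m a b := by
  rw [fm_mk, Fm_tmul, Bm_ee hm]

lemma symAct_mkQ (g : G4) (y : ↥W ⊗[ℂ] ↥W) :
    symAct g (symRel.mkQ y) = symRel.mkQ (tenAct g y) := by
  rw [Submodule.mkQ_apply, symAct, Submodule.mapQ_apply, Submodule.mkQ_apply]

lemma Fm_equiv (m : G4 → ℂ) (g : G4) (y : ↥W ⊗[ℂ] ↥W) :
    Fm m (tenAct g y) = chi3 g * Fm m y := by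
  induction y using TensorProduct.induction_on with
  | zero => simp
  | tmul x y =>
    rw [tenAct, TensorProduct.map_tmul, Fm_tmul, Fm_tmul]
    have hx : ((regW g x : W) : G4 → ℂ) = reg g (x : G4 → ℂ) := rfl
    have hy : ((regW g y : W) : G4 → ℂ) = reg g (y : G4 → ℂ) := rfl
    rw [hx, hy, Bm_equiv]
  | add u v hu hv =>
    rw [map_add, map_add, map_add, hu, hv]
    ring

lemma fm_mem {m : G4 → ℂ} (hm : m ∈ S) : fm hm ∈ eqMaps chi3 := by
  intro g z
  obtain ⟨y, rfl⟩ := Submodule.mkQ_surjective symRel z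
  rw [symAct_mkQ]
  show Fm m (tenAct g y) = chi3 g * Fm m y
  exact Fm_equiv m g y

lemma q_tmul_sum (x : W) (f : G4 → W) :
    q (x ⊗ₜ[ℂ] (∑ c : G4, f c)) = ∑ c : G4, q (x ⊗ₜ[ℂ] f c) := by
  rw [TensorProduct.tmul_sum, map_sum]

lemma Phi_mem (f : Sym2W →ₗ[ℂ] ℂ) (hf : f ∈ eqMaps chi3) :
    (fun b => f (q (ee 1 ⊗ₜ[ℂ] ee b))) ∈ S := by
  constructor
  · intro b
    have h1 : q (ee 1 ⊗ₜ[ℂ] ee b) = q (ee b ⊗ₜ[ℂ] ee 1) := q_symm _ _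
    have h2 : symAct b (q (ee 1 ⊗ₜ[ℂ] ee b⁻¹)) = q (ee b ⊗ₜ[ℂ] ee 1) := by
      rw [symAct_mk, regW_ee, regW_ee, mul_one, mul_inv_cancel]
    show f (q (ee 1 ⊗ₜ[ℂ] ee b)) = chi3 b * f (q (ee 1 ⊗ₜ[ℂ] ee b⁻¹))
    rw [h1, ← h2, hf b]
  · show ∑ c : G4, chi3 c * f (q (ee 1 ⊗ₜ[ℂ] ee c)) = 0
    have key : ∀ c : G4, chi3 c * f (q (ee 1 ⊗ₜ[ℂ] ee c)) = f (q (ee 1 ⊗ₜ[ℂ] ee c⁻¹)) := by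
      intro c
      have h2 : symAct c⁻¹ (q (ee 1 ⊗ₜ[ℂ] ee c)) = q (ee 1 ⊗ₜ[ℂ] ee c⁻¹) := by
        rw [symAct_mk, regW_ee, regW_ee, mul_one, inv_mul_cancel]
        exact (q_symm _ _).symm
      rw [← chi3_inv, ← hf c⁻¹, h2]
    rw [Finset.sum_congr rfl (fun c _ => key c)]
    have h3 : ∑ c : G4, f (q (ee 1 ⊗ₜ[ℂ] ee c⁻¹)) = ∑ c : G4, f (q (ee 1 ⊗ₜ[ℂ] ee c)) :=
      Fintype.sum_equiv (Equiv.inv G4) _ _ (fun c => rfl)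
    rw [h3, ← map_sum, ← q_tmul_sum, sum_ee, TensorProduct.tmul_zero, map_zero, map_zero]

noncomputable def Phi : (eqMaps chi3) →ₗ[ℂ] S where
  toFun f := ⟨fun b => (f : Sym2W →ₗ[ℂ] ℂ) (q (ee 1 ⊗ₜ[ℂ] ee b)), Phi_mem f f.2⟩
  map_add' f f' := by
    apply Subtype.ext; funext b
    simp
  map_smul' c f := by
    apply Subtype.ext; funext b
    simp

noncomputable def Psi : S →ₗ[ℂ] (eqMaps chi3) where
  toFun m := ⟨fm m.2, fm_mem m.2⟩
  map_add' m m' := by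
    apply Subtype.ext
    show fm (m + m').2 = fm m.2 + fm m'.2
    apply sym_ext
    intro a b
    rw [LinearMap.add_apply, fm_ee, fm_ee, fm_ee]
    show chi3 a * (m + m' : S).1 (a⁻¹ * b) = Mm m.1 a b + Mm m'.1 a b
    rw [Submodule.coe_add, Pi.add_apply, Mm, Mm]
    ring
  map_smul' c m := by
    apply Subtype.ext
    show fm (c • m).2 = c • fm m.2
    apply sym_ext
    intro a b
    rw [LinearMap.smul_apply, fm_ee, fm_ee]
    show chi3 a * (c • m : S).1 (a⁻¹ * b) = c • Mm m.1 a b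
    rw [Submodule.coe_smul, Pi.smul_apply, Mm, smul_eq_mul, smul_eq_mul]
    ring

lemma Phi_Psi (m : S) : Phi (Psi m) = m := by
  apply Subtype.ext; funext b
  show fm m.2 (q (ee 1 ⊗ₜ[ℂ] ee b)) = m.1 b
  rw [fm_ee, Mm, chi3_one, inv_one, one_mul, one_mul]

lemma Psi_Phi (f : eqMaps chi3) : Psi (Phi f) = f := by
  apply Subtype.ext
  show fm (Phi f).2 = (f : Sym2W →ₗ[ℂ] ℂ)
  apply sym_ext
  intro a b
  rw [fm_ee]
  show chi3 a * (f : Sym2W →ₗ[ℂ] ℂ) (q (ee 1 ⊗ₜ[ℂ] ee (a⁻¹ * b)))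
      = (f : Sym2W →ₗ[ℂ] ℂ) (q (ee a ⊗ₜ[ℂ] ee b))
  have h : symAct a (q (ee 1 ⊗ₜ[ℂ] ee (a⁻¹ * b))) = q (ee a ⊗ₜ[ℂ] ee b) := by
    rw [symAct_mk, regW_ee, regW_ee, mul_one, mul_inv_cancel_left]
  rw [← h, f.2 a]

noncomputable def eqEquiv : (eqMaps chi3) ≃ₗ[ℂ] S :=
  LinearEquiv.ofLinear Phi Psi
    (LinearMap.ext fun m => Phi_Psi m) (LinearMap.ext fun f => Psi_Phi f)

noncomputable def mf (v : Fin 4 → ℂ) : G4 → ℂ := fun x =>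
  if x = .r 0 then -(v 1 + v 2 + v 3)
  else if x = .r 1 then v 0
  else if x = .r 2 then v 1
  else if x = .r 3 then -v 0
  else if x = .sr 1 then v 2
  else if x = .sr 3 then v 3
  else 0

lemma chi3_r0 : chi3 (.r 0) = 1 := by
  rw [chi3_eq_chiZ, show chiZ (.r 0) = 1 from by decide]; norm_num

lemma chi3_r1 : chi3 (.r 1) = -1 := by
  rw [chi3_eq_chiZ, show chiZ (.r 1) = -1 from by decide]; norm_num

lemma chi3_r2 : chi3 (.r 2) = 1 := by
  rw [chi3_eq_chiZ, show chiZ (.r 2) = 1 from by decide]; norm_num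

lemma chi3_r3 : chi3 (.r 3) = -1 := by
  rw [chi3_eq_chiZ, show chiZ (.r 3) = -1 from by decide]; norm_num

lemma chi3_sr0 : chi3 (.sr 0) = -1 := by
  rw [chi3_eq_chiZ, show chiZ (.sr 0) = -1 from by decide]; norm_num

lemma chi3_sr1 : chi3 (.sr 1) = 1 := by
  rw [chi3_eq_chiZ, show chiZ (.sr 1) = 1 from by decide]; norm_num

lemma chi3_sr2 : chi3 (.sr 2) = -1 := by
  rw [chi3_eq_chiZ, show chiZ (.sr 2) = -1 from by decide]; norm_num

lemma chi3_sr3 : chi3 (.sr 3) = 1 := by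
  rw [chi3_eq_chiZ, show chiZ (.sr 3) = 1 from by decide]; norm_num

lemma G4_cases (b : G4) : b = .r 0 ∨ b = .r 1 ∨ b = .r 2 ∨ b = .r 3 ∨
    b = .sr 0 ∨ b = .sr 1 ∨ b = .sr 2 ∨ b = .sr 3 := by
  revert b; decide

lemma mf_mem (v : Fin 4 → ℂ) : mf v ∈ S := by
  constructor
  · intro b
    rcases G4_cases b with rfl|rfl|rfl|rfl|rfl|rfl|rfl|rfl
    · rw [show ((DihedralGroup.r 0 : G4))⁻¹ = .r 0 from by decide, chi3_r0]
      simp (config := { decide := true }) [mf]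
    · rw [show ((DihedralGroup.r 1 : G4))⁻¹ = .r 3 from by decide, chi3_r1]
      simp (config := { decide := true }) [mf]
    · rw [show ((DihedralGroup.r 2 : G4))⁻¹ = .r 2 from by decide, chi3_r2]
      simp (config := { decide := true }) [mf]
    · rw [show ((DihedralGroup.r 3 : G4))⁻¹ = .r 1 from by decide, chi3_r3]
      simp (config := { decide := true }) [mf]
    · rw [show ((DihedralGroup.sr 0 : G4))⁻¹ = .sr 0 from by decide, chi3_sr0]
      simp (config := { decide := true }) [mf]
    · rw [show ((DihedralGroup.sr 1 : G4))⁻¹ = .sr 1 from by decide, chi3_sr1]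
      simp (config := { decide := true }) [mf]
    · rw [show ((DihedralGroup.sr 2 : G4))⁻¹ = .sr 2 from by decide, chi3_sr2]
      simp (config := { decide := true }) [mf]
    · rw [show ((DihedralGroup.sr 3 : G4))⁻¹ = .sr 3 from by decide, chi3_sr3]
      simp (config := { decide := true }) [mf]
  · rw [sum_G (fun c => chi3 c * mf v c)]
    rw [chi3_r0, chi3_r1, chi3_r2, chi3_r3, chi3_sr0, chi3_sr1, chi3_sr2, chi3_sr3]
    simp (config := { decide := true }) [mf]
    ring

noncomputable def toFin : S →ₗ[ℂ] (Fin 4 → ℂ) where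
  toFun m := fun i => m.1 (![.r 1, .r 2, .sr 1, .sr 3] i)
  map_add' m m' := by funext i; rfl
  map_smul' c m := by funext i; rfl

noncomputable def ofFin : (Fin 4 → ℂ) →ₗ[ℂ] S where
  toFun v := ⟨mf v, mf_mem v⟩
  map_add' v v' := by
    apply Subtype.ext; funext x
    show mf (v + v') x = mf v x + mf v' x
    rcases G4_cases x with rfl|rfl|rfl|rfl|rfl|rfl|rfl|rfl <;>
      simp (config := { decide := true }) [mf] <;> ring
  map_smul' c v := by
    apply Subtype.ext; funext x
    show mf (c • v) x = c * mf v x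
    rcases G4_cases x with rfl|rfl|rfl|rfl|rfl|rfl|rfl|rfl <;>
      simp (config := { decide := true }) [mf] <;> ring

lemma toFin_ofFin (v : Fin 4 → ℂ) : toFin (ofFin v) = v := by
  funext i
  fin_cases i <;> simp (config := { decide := true }) [toFin, ofFin, mf]

lemma ofFin_toFin (m : S) : ofFin (toFin m) = m := by
  have hm := m.2
  have h1 := hm.1
  have hr3 : m.1 (.r 3) = -(m.1 (.r 1)) := by
    have := h1 (.r 1)
    rw [show ((DihedralGroup.r 1 : G4))⁻¹ = .r 3 from by decide, chi3_r1] at this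
    linear_combination this
  have hsr0 : m.1 (.sr 0) = 0 := by
    have := h1 (.sr 0)
    rw [show ((DihedralGroup.sr 0 : G4))⁻¹ = .sr 0 from by decide, chi3_sr0] at this
    linear_combination this / 2
  have hsr2 : m.1 (.sr 2) = 0 := by
    have := h1 (.sr 2)
    rw [show ((DihedralGroup.sr 2 : G4))⁻¹ = .sr 2 from by decide, chi3_sr2] at this
    linear_combination this / 2
  have hsum := hm.2
  rw [sum_G (fun c => chi3 c * m.1 c)] at hsum
  rw [chi3_r0, chi3_r1, chi3_r2, chi3_r3, chi3_sr0, chi3_sr1, chi3_sr2, chi3_sr3] at hsum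
  have hr0 : m.1 (.r 0) = -(m.1 (.r 2) + m.1 (.sr 1) + m.1 (.sr 3)) := by
    rw [hr3, hsr0, hsr2] at hsum
    linear_combination hsum
  apply Subtype.ext; funext x
  show mf (fun i => m.1 (![.r 1, .r 2, .sr 1, .sr 3] i)) x = m.1 x
  rcases G4_cases x with rfl|rfl|rfl|rfl|rfl|rfl|rfl|rfl <;>
    simp (config := { decide := true }) [mf] <;>
    first
      | (rw [hr0]; ring)
      | (rw [show (1 : G4) = .r 0 from rfl, hr0]; ring)
      | (rw [hr3]; ring)
      | exact hr3.symm
      | (rw [hsr0])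
      | (rw [hsr2])
      | rfl

noncomputable def SEquiv : S ≃ₗ[ℂ] (Fin 4 → ℂ) :=
  LinearEquiv.ofLinear toFin ofFin
    (LinearMap.ext fun v => toFin_ofFin v) (LinearMap.ext fun m => ofFin_toFin m)

/-- The multiplicity of the character `χ₃` in `Sym² W` is 4. -/
theorem finrank_eqMaps_chi3_eq_four : Module.finrank ℂ (eqMaps chi3) = 4 := by
  rw [LinearEquiv.finrank_eq (eqEquiv.trans SEquiv)]
  simp [Module.finrank_pi]
end
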